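/- Let $M_1, \dots, M_N$ be symmetric positive semidefinite $2 \times 2$ real matrices, let $c > 0$, let $j_p, j_{c_1}, \dots, j_{c_N} \in \mathbb{R}^2$, and set $\beta_p := -c\,j_p$ and $f_i(j) := \tfrac{c}{2}\, j \cdot (M_i\, j)$. Then the nodal entropy production dominates the conservative flux exchange: $\beta_p \cdot \sum_{i=1}^{N} M_i\,(j_{c_i} - j_p) \;\ge\; \sum_{i=1}^{N} \big(f_i(j_p) - f_i(j_{c_i})\big)$. In particular, the dissipative part $\tfrac{c}{2}\sum_i (j_{c_i}-j_p)\cdot M_i (j_{c_i}-j_p)$ of the semi-discrete entropy rate at the node is nonnegative (local entropy inequality, Proposition 3.3). -/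

import Mathlib

open Matrix

lemma psd_nonneg (A : Matrix (Fin 2) (Fin 2) ℝ) (hA : A.PosSemidef) (x : Fin 2 → ℝ) :
    0 ≤ x ⬝ᵥ (A *ᵥ x) := by
  have := hA.dotProduct_mulVec_nonneg x
  simpa using this

lemma key_identity (A : Matrix (Fin 2) (Fin 2) ℝ) (hA : A.PosSemidef) (c : ℝ)
    (jp jc : Fin 2 → ℝ) :
    (-(c • jp)) ⬝ᵥ (A *ᵥ (jc - jp)) -
      ((c / 2) * (jp ⬝ᵥ (A *ᵥ jp)) - (c / 2) * (jc ⬝ᵥ (A *ᵥ jc))) =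
      (c / 2) * ((jc - jp) ⬝ᵥ (A *ᵥ (jc - jp))) := by
  have hs : A 0 1 = A 1 0 := by
    have h := hA.1
    have := congrFun (congrFun h 0) 1
    simpa [Matrix.conjTranspose_apply] using this.symm
  simp only [dotProduct, mulVec, Fin.sum_univ_two, Pi.neg_apply, Pi.smul_apply,
    Pi.sub_apply, smul_eq_mul]
  rw [hs]; ring

theorem local_entropy_inequality (N : ℕ)
    (M : Fin N → Matrix (Fin 2) (Fin 2) ℝ)
    (hM : ∀ i, (M i).PosSemidef)
    (c : ℝ) (hc : 0 < c) (jp : Fin 2 → ℝ) (jc : Fin N → Fin 2 → ℝ)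
    (βp : Fin 2 → ℝ) (hβ : βp = -(c • jp))
    (f : Fin N → (Fin 2 → ℝ) → ℝ)
    (hf : ∀ (i : Fin N) (j : Fin 2 → ℝ), f i j = (c / 2) * (j ⬝ᵥ (M i *ᵥ j))) :
    (βp ⬝ᵥ (∑ i : Fin N, M i *ᵥ (jc i - jp)) ≥ ∑ i : Fin N, (f i jp - f i (jc i))) ∧
      0 ≤ (c / 2) * ∑ i : Fin N, (jc i - jp) ⬝ᵥ (M i *ᵥ (jc i - jp)) := by
  have hpsd : ∀ i, (0:ℝ) ≤ (jc i - jp) ⬝ᵥ (M i *ᵥ (jc i - jp)) :=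
    fun i => psd_nonneg _ (hM i) _
  constructor
  · subst hβ
    have hdp : (-(c • jp)) ⬝ᵥ (∑ i : Fin N, M i *ᵥ (jc i - jp)) =
        ∑ i : Fin N, (-(c • jp)) ⬝ᵥ (M i *ᵥ (jc i - jp)) := by
      simp only [dotProduct, Finset.sum_apply, Finset.mul_sum]
      rw [Finset.sum_comm]
    rw [hdp]
    rw [ge_iff_le, ← sub_nonneg, ← Finset.sum_sub_distrib]
    apply Finset.sum_nonneg
    intro i _
    have h := key_identity (M i) (hM i) c jp (jc i)
    rw [hf i jp, hf i (jc i)]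
    rw [h]
    exact mul_nonneg (by linarith) (hpsd i)
  · exact mul_nonneg (by linarith) (Finset.sum_nonneg fun i _ => hpsd i)
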